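/- If L is a Scott retract of a poset M that has one-step closure (i.e., there exist Scott-continuous maps s : L → M and r : M → L with r ∘ s = id_L), then L has one-step closure. The same statement holds with 'one-step closure' replaced by 'weak one-step closure'. -/

import Mathlib

open Set

section OrderDefs

variable {L : Type*} [Preorder L]

/-- Downward closure `↓A`. -/
def dw (A : Set L) : Set L := {x | ∃ a ∈ A, x ≤ a}

/-- Upward closure `↑A`. -/
def up (A : Set L) : Set L := {x | ∃ a ∈ A, a ≤ x}

/-- Scott closure of a set. -/
def scottCl (A : Set L) : Set L := @closure L (Topology.scott L Set.univ) A

/-- `A' = {x : ∃ directed D ⊆ ↓A with x = sup D}`. -/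
def oneStep (A : Set L) : Set L :=
  {x | ∃ D : Set L, D ⊆ dw A ∧ D.Nonempty ∧ DirectedOn (· ≤ ·) D ∧ IsLUB D x}

/-- `A'' = {x : ∃ directed D ⊆ ↓A with x ≤ sup D}`. -/
def weakOneStep (A : Set L) : Set L :=
  {x | ∃ D : Set L, D ⊆ dw A ∧ D.Nonempty ∧ DirectedOn (· ≤ ·) D ∧ ∃ y, IsLUB D y ∧ x ≤ y}

/-- A poset has one-step closure if `cl(A) = A'` for all `A`. -/
def HasOneStepClosure (L : Type*) [Preorder L] : Prop :=
  ∀ A : Set L, scottCl A = oneStep A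

/-- A poset has weak one-step closure if `cl(A) = A''` for all `A`. -/
def HasWeakOneStepClosure (L : Type*) [Preorder L] : Prop :=
  ∀ A : Set L, scottCl A = weakOneStep A

/-- Meet continuity: `x ≤ sup D` implies `x ∈ cl(↓D ∩ ↓x)`. -/
def MeetContinuous (L : Type*) [Preorder L] : Prop :=
  ∀ x : L, ∀ D : Set L, D.Nonempty → DirectedOn (· ≤ ·) D → ∀ s, IsLUB D s → x ≤ s →
    x ∈ scottCl (dw D ∩ dw ({x} : Set L))

/-- The way-below relation `x ≪ y`. -/
def wayBelow (x y : L) : Prop :=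
  ∀ D : Set L, D.Nonempty → DirectedOn (· ≤ ·) D → ∀ s, IsLUB D s → y ≤ s →
    (D ∩ up ({x} : Set L)).Nonempty

/-- The weakly way-below relation `x ≪_w y`. -/
def weaklyWayBelow (x y : L) : Prop :=
  ∀ D : Set L, D.Nonempty → DirectedOn (· ≤ ·) D → IsLUB D y →
    (D ∩ up ({x} : Set L)).Nonempty

/-- A continuous poset: each `⇓x` is directed with supremum `x`. -/
def ContinuousPoset (L : Type*) [Preorder L] : Prop :=
  ∀ x : L, {y | wayBelow y x}.Nonempty ∧ DirectedOn (· ≤ ·) {y | wayBelow y x} ∧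
    IsLUB {y | wayBelow y x} x

/-- An exact poset: each `⇓_w x` is directed with supremum `x`. -/
def ExactPoset (L : Type*) [Preorder L] : Prop :=
  ∀ x : L, {y | weaklyWayBelow y x}.Nonempty ∧ DirectedOn (· ≤ ·) {y | weaklyWayBelow y x} ∧
    IsLUB {y | weaklyWayBelow y x} x

/-- `F ≪ x` for a set `F`: every directed `D` with `sup D ≥ x` meets `↑F`. -/
def finWayBelow (F : Set L) (x : L) : Prop :=
  ∀ D : Set L, D.Nonempty → DirectedOn (· ≤ ·) D → ∀ s, IsLUB D s → x ≤ s →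
    (D ∩ up F).Nonempty

/-- A quasicontinuous poset: each `fin(x)` is a directed family (Smyth preorder)
with `↑x = ⋂_{F ∈ fin(x)} ↑F`. -/
def QuasicontinuousPoset (L : Type*) [Preorder L] : Prop :=
  ∀ x : L, {F : Set L | F.Finite ∧ finWayBelow F x}.Nonempty ∧
    DirectedOn (fun F G => up G ⊆ up F) {F : Set L | F.Finite ∧ finWayBelow F x} ∧
    up ({x} : Set L) = ⋂ F ∈ {F : Set L | F.Finite ∧ finWayBelow F x}, up F

/-- A dcpo: every (nonempty) directed subset has a least upper bound. -/
def IsDcpo (L : Type*) [Preorder L] : Prop :=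
  ∀ D : Set L, D.Nonempty → DirectedOn (· ≤ ·) D → ∃ x, IsLUB D x

end OrderDefs

/-- If `L` is a Scott retract of `M` (there are Scott-continuous `s : L → M`, `r : M → L`
with `r ∘ s = id`), then one-step closure (resp. weak one-step closure) of `M` is inherited
by `L`. -/
theorem scottRetract_oneStepClosure {L M : Type*} [PartialOrder L] [PartialOrder M]
    (s : L → M) (r : M → L)
    (hs : @Continuous L M (Topology.scott L Set.univ) (Topology.scott M Set.univ) s)
    (hr : @Continuous M L (Topology.scott M Set.univ) (Topology.scott L Set.univ) r)
    (hrs : r ∘ s = id) :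
    (HasOneStepClosure M → HasOneStepClosure L) ∧
      (HasWeakOneStepClosure M → HasWeakOneStepClosure L) := by
  letI tL : TopologicalSpace L := Topology.scott L Set.univ
  letI tM : TopologicalSpace M := Topology.scott M Set.univ
  haveI : Topology.IsScott L Set.univ := ⟨rfl⟩
  haveI : Topology.IsScott M Set.univ := ⟨rfl⟩
  have hDL : ∀ a b : L, a ≤ b → ({a, b} : Set L) ∈ (Set.univ : Set (Set L)) :=
    fun _ _ _ => trivial
  have hDM : ∀ a b : M, a ≤ b → ({a, b} : Set M) ∈ (Set.univ : Set (Set M)) :=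
    fun _ _ _ => trivial
  have hrS : ScottContinuousOn Set.univ r :=
    (Topology.IsScott.scottContinuousOn_iff_continuous hDM).2 hr
  have hrmono : Monotone r := hrS.monotone _ hDM
  have hrsx : ∀ x : L, r (s x) = x := fun x => congrFun hrs x
  -- `oneStep A ⊆ scottCl A` and `weakOneStep A ⊆ scottCl A` in any poset.
  have hsub : ∀ A : Set L, weakOneStep A ⊆ scottCl A := by
    intro A x hx
    obtain ⟨D, hDA, hDne, hDdir, y, hy, hxy⟩ := hx
    have hcl : IsClosed (scottCl A) := isClosed_closure
    rw [Topology.IsScott.isClosed_iff_isLowerSet_and_dirSupClosed] at hcl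
    have hDcl : D ⊆ scottCl A := by
      intro d hd
      obtain ⟨a, haA, hda⟩ := hDA hd
      exact hcl.1 hda (subset_closure haA)
    exact hcl.1 hxy (hcl.2 hDcl hDne hDdir hy)
  have hsub1 : ∀ A : Set L, oneStep A ⊆ scottCl A := by
    intro A x hx
    obtain ⟨D, hDA, hDne, hDdir, hx⟩ := hx
    exact hsub A ⟨D, hDA, hDne, hDdir, x, hx, le_rfl⟩
  -- the image structure: from data in M to data in L
  have himg : ∀ (A : Set L) (D : Set M), D ⊆ dw (s '' A) → D.Nonempty →
      DirectedOn (· ≤ ·) D →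
      (r '' D ⊆ dw A ∧ (r '' D).Nonempty ∧ DirectedOn (· ≤ ·) (r '' D)) := by
    intro A D hDA hDne hDdir
    refine ⟨?_, hDne.image r, directedOn_image.2 (hDdir.mono ?_)⟩
    · rintro _ ⟨d, hd, rfl⟩
      obtain ⟨_, ⟨a, haA, rfl⟩, hda⟩ := hDA hd
      exact ⟨a, haA, by simpa [hrsx a] using hrmono hda⟩
    · intro a b hab
      exact hrmono hab
  -- closure is mapped by `s`
  have hmap : ∀ A : Set L, ∀ x ∈ scottCl A, s x ∈ scottCl (s '' A) := by
    intro A x hx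
    exact image_closure_subset_closure_image hs ⟨x, hx, rfl⟩
  constructor
  · intro hM A
    apply subset_antisymm _ (hsub1 A)
    intro x hx
    have := hmap A x hx
    rw [show scottCl (s '' A) = oneStep (s '' A) from hM (s '' A)] at this
    obtain ⟨D, hDA, hDne, hDdir, hlub⟩ := this
    obtain ⟨h1, h2, h3⟩ := himg A D hDA hDne hDdir
    refine ⟨r '' D, h1, h2, h3, ?_⟩
    have := hrS (mem_univ D) hDne hDdir hlub
    rwa [hrsx x] at this
  · intro hM A
    apply subset_antisymm _ (hsub A)
    intro x hx
    have := hmap A x hx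
    rw [show scottCl (s '' A) = weakOneStep (s '' A) from hM (s '' A)] at this
    obtain ⟨D, hDA, hDne, hDdir, y, hy, hxy⟩ := this
    obtain ⟨h1, h2, h3⟩ := himg A D hDA hDne hDdir
    refine ⟨r '' D, h1, h2, h3, r y, hrS (mem_univ D) hDne hDdir hy, ?_⟩
    calc x = r (s x) := (hrsx x).symm
    _ ≤ r y := hrmono hxy
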